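/- Let C > 0, v ≥ 0 and ψ > 0, and define f : ℝ → ℝ by f(θ) = (1+v)·C·Φ((log((1+v)·C) − θ)/ψ) − exp(θ + ψ²/2)·Φ((log((1+v)·C) − θ)/ψ − ψ). Then f is strictly decreasing on ℝ, lim_{θ→−∞} f(θ) = (1+v)·C, and lim_{θ→∞} f(θ) = 0. -/

import Mathlib

open Real Filter

/-- The standard normal density `φ(u) = (2π)^{-1/2} exp(-u²/2)`. -/
noncomputable def stdNormalPDF (u : ℝ) : ℝ := (Real.sqrt (2 * Real.pi))⁻¹ * Real.exp (-u ^ 2 / 2)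

/-- The standard normal cumulative distribution function `Φ`. -/
noncomputable def stdNormalCDF (x : ℝ) : ℝ := ∫ u in Set.Iic x, stdNormalPDF u

open MeasureTheory Set Topology

lemma sqrt2pi_pos : 0 < Real.sqrt (2 * Real.pi) := Real.sqrt_pos.mpr (by positivity)

lemma pdf_cont : Continuous stdNormalPDF := by
  unfold stdNormalPDF; fun_prop

lemma pdf_pos (u : ℝ) : 0 < stdNormalPDF u := by
  unfold stdNormalPDF; positivity

lemma pdf_integrable : Integrable stdNormalPDF := by
  have h : Integrable (fun u : ℝ => (Real.sqrt (2*Real.pi))⁻¹ * Real.exp (-(1/2) * u ^ 2)) :=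
    (integrable_exp_neg_mul_sq (by norm_num)).const_mul _
  refine h.congr (Filter.Eventually.of_forall fun u => ?_)
  unfold stdNormalPDF; ring_nf

lemma pdf_total : ∫ u, stdNormalPDF u = 1 := by
  have h : ∫ u : ℝ, Real.exp (-(1/2) * u ^ 2) = Real.sqrt (Real.pi / (1/2)) :=
    integral_gaussian (1/2)
  have h2 : ∫ u, stdNormalPDF u = (Real.sqrt (2*Real.pi))⁻¹ * ∫ u : ℝ, Real.exp (-(1/2) * u ^ 2) := by
    rw [← MeasureTheory.integral_const_mul]
    congr 1; funext u; unfold stdNormalPDF; ring_nf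
  rw [h2, h, show Real.pi / (1/2) = 2 * Real.pi by ring]
  exact inv_mul_cancel₀ sqrt2pi_pos.ne'

lemma cdf_hasDerivAt (x : ℝ) : HasDerivAt stdNormalCDF (stdNormalPDF x) x := by
  have heq : stdNormalCDF = fun y => stdNormalCDF 0 + ∫ t in (0:ℝ)..y, stdNormalPDF t := by
    funext y
    have h := intervalIntegral.integral_Iic_sub_Iic
      (pdf_integrable.integrableOn (s := Iic (0:ℝ))) (pdf_integrable.integrableOn (s := Iic y))
    unfold stdNormalCDF
    linarith [h]
  rw [heq]
  have h : HasDerivAt (fun y => ∫ t in (0:ℝ)..y, stdNormalPDF t) (stdNormalPDF x) x :=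
    intervalIntegral.integral_hasDerivAt_right (pdf_cont.intervalIntegrable _ _)
      pdf_cont.stronglyMeasurable.stronglyMeasurableAtFilter pdf_cont.continuousAt
  exact h.const_add _

lemma cdf_nonneg (x : ℝ) : 0 ≤ stdNormalCDF x :=
  setIntegral_nonneg measurableSet_Iic fun u _ => (pdf_pos u).le

lemma cdf_le_one (x : ℝ) : stdNormalCDF x ≤ 1 := by
  rw [← pdf_total]
  exact setIntegral_le_integral pdf_integrable (Filter.Eventually.of_forall fun u => (pdf_pos u).le)

lemma cdf_pos (x : ℝ) : 0 < stdNormalCDF x := by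
  unfold stdNormalCDF
  rw [setIntegral_pos_iff_support_of_nonneg_ae
    (Filter.Eventually.of_forall fun u => (pdf_pos u).le) pdf_integrable.integrableOn]
  have hs : Function.support stdNormalPDF = univ := by
    ext u; simp [Function.mem_support, (pdf_pos u).ne']
  rw [hs, univ_inter, Real.volume_Iic]
  exact ENNReal.zero_lt_top

lemma cdf_tendsto_atTop : Tendsto stdNormalCDF atTop (𝓝 1) := by
  have h := (aecover_Iic (μ := (volume : Measure ℝ)) (l := atTop)
    (tendsto_id (α := ℝ))).integral_tendsto_of_countably_generated pdf_integrable
  rw [pdf_total] at h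
  exact h

lemma hasDerivAt_exp_mul {l : ℝ} (hl : l ≠ 0) (u : ℝ) :
    HasDerivAt (fun w => Real.exp (l * w) / l) (Real.exp (l * u)) u := by
  have h := (((hasDerivAt_id u).const_mul l).exp).div_const l
  simpa [mul_one, mul_div_assoc, div_self hl] using h

lemma integrableOn_exp_mul_Iic' {l : ℝ} (hl : 0 < l) (x : ℝ) :
    IntegrableOn (fun u => Real.exp (l * u)) (Iic x) := by
  have hcont : Continuous fun u : ℝ => Real.exp (l * u) := by fun_prop
  refine integrableOn_Iic_of_intervalIntegral_norm_bounded (Real.exp (l*x)/l) x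
    (fun y => hcont.integrableOn_Ioc) tendsto_id ?_
  filter_upwards [eventually_le_atBot x] with y hy
  simp only [id_eq, Real.norm_eq_abs, abs_of_nonneg (Real.exp_pos _).le]
  rw [intervalIntegral.integral_eq_sub_of_hasDerivAt
    (fun u _ => hasDerivAt_exp_mul hl.ne' u) (hcont.intervalIntegrable _ _)]
  have h1 : Real.exp (l * y) ≤ Real.exp (l * x) :=
    Real.exp_le_exp.mpr (by nlinarith)
  nlinarith [div_pos (Real.exp_pos (l*y)) hl]

lemma integral_exp_mul_Iic' {l : ℝ} (hl : 0 < l) (x : ℝ) :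
    ∫ u in Iic x, Real.exp (l * u) = Real.exp (l * x) / l := by
  have h1 : ∫ u in Iic x, Real.exp (l * u) = ∫ u in Iic x, (fun w => Real.exp (-(l * w))) (-u) := by
    congr 1; funext u; simp [mul_neg, neg_neg]
  have h2 := integral_comp_neg_Iic x (fun w => Real.exp (-(l * w)))
  have h3 := integral_comp_mul_left_Ioi (fun w => Real.exp (-w)) (-x) hl
  rw [h1, h2, h3, integral_exp_neg_Ioi]
  rw [smul_eq_mul, mul_neg, neg_neg]
  ring

lemma cdf_le_exp {l : ℝ} (hl : 0 < l) (x : ℝ) :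
    stdNormalCDF x ≤ (Real.sqrt (2*Real.pi))⁻¹ * Real.exp (l^2/2) / l * Real.exp (l * x) := by
  have hb : ∀ u : ℝ, stdNormalPDF u ≤
      (Real.sqrt (2*Real.pi))⁻¹ * Real.exp (l^2/2) * Real.exp (l * u) := by
    intro u
    unfold stdNormalPDF
    rw [mul_assoc, ← Real.exp_add]
    refine mul_le_mul_of_nonneg_left ?_ (inv_nonneg.mpr (Real.sqrt_nonneg _))
    refine Real.exp_le_exp.mpr ?_
    nlinarith [sq_nonneg (u + l)]
  have step1 : stdNormalCDF x ≤
      ∫ u in Iic x, (Real.sqrt (2*Real.pi))⁻¹ * Real.exp (l^2/2) * Real.exp (l*u) := by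
    refine setIntegral_mono_on pdf_integrable.integrableOn
      ((integrableOn_exp_mul_Iic' hl x).const_mul _) measurableSet_Iic fun u _ => hb u
  have step2 : ∫ u in Iic x, (Real.sqrt (2*Real.pi))⁻¹ * Real.exp (l^2/2) * Real.exp (l*u)
      = (Real.sqrt (2*Real.pi))⁻¹ * Real.exp (l^2/2) * (Real.exp (l*x)/l) := by
    rw [MeasureTheory.integral_const_mul, integral_exp_mul_Iic' hl]
  rw [step2] at step1
  calc stdNormalCDF x ≤ _ := step1
    _ = _ := by ring

lemma cdf_tendsto_atBot : Tendsto stdNormalCDF atBot (𝓝 0) := by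
  have h : Tendsto (fun x : ℝ => Real.exp (1 * x)) atBot (𝓝 0) :=
    Real.tendsto_exp_atBot.comp (tendsto_id.congr fun x => (one_mul x).symm)
  have hub := h.const_mul ((Real.sqrt (2*Real.pi))⁻¹ * Real.exp ((1:ℝ)^2/2) / 1)
  rw [mul_zero] at hub
  exact tendsto_of_tendsto_of_tendsto_of_le_of_le tendsto_const_nhds hub
    (fun x => cdf_nonneg x) (fun x => cdf_le_exp one_pos x)

/-- For `C > 0`, `v ≥ 0` and `ψ > 0`, the function
`f(θ) = (1+v)·C·Φ((log((1+v)·C) - θ)/ψ) - exp(θ + ψ²/2)·Φ((log((1+v)·C) - θ)/ψ - ψ)` is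
strictly decreasing on `ℝ`, with `lim_{θ→-∞} f(θ) = (1+v)·C` and `lim_{θ→∞} f(θ) = 0`. -/
theorem shortfall_strictAnti_and_limits (C v ψ : ℝ) (hC : 0 < C) (hv : 0 ≤ v) (hψ : 0 < ψ) :
    StrictAnti (fun θ : ℝ =>
      (1 + v) * C * stdNormalCDF ((Real.log ((1 + v) * C) - θ) / ψ)
        - Real.exp (θ + ψ ^ 2 / 2) * stdNormalCDF ((Real.log ((1 + v) * C) - θ) / ψ - ψ)) ∧
    Tendsto (fun θ : ℝ =>
      (1 + v) * C * stdNormalCDF ((Real.log ((1 + v) * C) - θ) / ψ)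
        - Real.exp (θ + ψ ^ 2 / 2) * stdNormalCDF ((Real.log ((1 + v) * C) - θ) / ψ - ψ))
      atBot (nhds ((1 + v) * C)) ∧
    Tendsto (fun θ : ℝ =>
      (1 + v) * C * stdNormalCDF ((Real.log ((1 + v) * C) - θ) / ψ)
        - Real.exp (θ + ψ ^ 2 / 2) * stdNormalCDF ((Real.log ((1 + v) * C) - θ) / ψ - ψ))
      atTop (nhds 0) := by
  have hK : 0 < (1 + v) * C := by positivity
  set K : ℝ := (1 + v) * C with hKdef
  set k : ℝ := Real.log K with hkdef
  have hek : Real.exp k = K := Real.exp_log hK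
  -- derivative facts
  have hderiv : ∀ θ : ℝ, HasDerivAt (fun θ : ℝ =>
      K * stdNormalCDF ((k - θ) / ψ) - Real.exp (θ + ψ ^ 2 / 2) * stdNormalCDF ((k - θ) / ψ - ψ))
      (-(Real.exp (θ + ψ ^ 2 / 2) * stdNormalCDF ((k - θ) / ψ - ψ))) θ := by
    intro θ
    have hg : HasDerivAt (fun θ : ℝ => (k - θ) / ψ) ((-1) / ψ) θ :=
      ((hasDerivAt_id θ).const_sub k).div_const ψ
    have h1 : HasDerivAt (fun θ : ℝ => stdNormalCDF ((k - θ) / ψ))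
        (stdNormalPDF ((k - θ) / ψ) * ((-1) / ψ)) θ :=
      by exact (cdf_hasDerivAt ((k - θ) / ψ)).comp θ hg
    have h2 : HasDerivAt (fun θ : ℝ => stdNormalCDF ((k - θ) / ψ - ψ))
        (stdNormalPDF ((k - θ) / ψ - ψ) * ((-1) / ψ)) θ :=
      by exact (cdf_hasDerivAt ((k - θ) / ψ - ψ)).comp θ (hg.sub_const ψ)
    have h3 : HasDerivAt (fun θ : ℝ => Real.exp (θ + ψ ^ 2 / 2)) (Real.exp (θ + ψ ^ 2 / 2)) θ := by
      simpa using ((hasDerivAt_id θ).add_const (ψ ^ 2 / 2)).exp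
    have h := (h1.const_mul K).sub (h3.mul h2)
    have hid : K * stdNormalPDF ((k - θ) / ψ)
        = Real.exp (θ + ψ ^ 2 / 2) * stdNormalPDF ((k - θ) / ψ - ψ) := by
      have hd : (k - θ) / ψ * ψ = k - θ := div_mul_cancel₀ _ hψ.ne'
      unfold stdNormalPDF
      rw [← hek, mul_left_comm, ← Real.exp_add, mul_left_comm (Real.exp (θ + ψ ^ 2 / 2)),
        ← Real.exp_add]
      congr 1
      field_simp
      ring
    convert h using 1
    · rfl
    · rfl
    · rfl
    linear_combination (1 / ψ) * hid
  refine ⟨?_, ?_, ?_⟩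
  · refine strictAnti_of_deriv_neg fun θ => ?_
    rw [(hderiv θ).deriv]
    exact neg_lt_zero.mpr (mul_pos (Real.exp_pos _) (cdf_pos _))
  · -- θ → -∞
    have hdTop : Tendsto (fun θ : ℝ => (k - θ) / ψ) atBot atTop := by
      apply Tendsto.atTop_div_const hψ
      have := tendsto_atTop_add_const_left atBot k tendsto_neg_atBot_atTop
      exact this.congr fun θ => by ring
    have hA : Tendsto (fun θ : ℝ => K * stdNormalCDF ((k - θ) / ψ)) atBot (𝓝 (K * 1)) :=
      (cdf_tendsto_atTop.comp hdTop).const_mul K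
    have hE : Tendsto (fun θ : ℝ => Real.exp (θ + ψ ^ 2 / 2)) atBot (𝓝 0) :=
      Real.tendsto_exp_atBot.comp (tendsto_atBot_add_const_right atBot (ψ ^ 2 / 2) tendsto_id)
    have hB : Tendsto (fun θ : ℝ =>
        Real.exp (θ + ψ ^ 2 / 2) * stdNormalCDF ((k - θ) / ψ - ψ)) atBot (𝓝 0) := by
      refine tendsto_of_tendsto_of_tendsto_of_le_of_le tendsto_const_nhds hE
        (fun θ => mul_nonneg (Real.exp_pos _).le (cdf_nonneg _)) (fun θ => ?_)
      exact mul_le_of_le_one_right (Real.exp_pos _).le (cdf_le_one _)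
    have := hA.sub hB
    rw [mul_one, sub_zero] at this
    exact this
  · -- θ → ∞
    have hdBot : Tendsto (fun θ : ℝ => (k - θ) / ψ) atTop atBot := by
      apply Tendsto.atBot_div_const hψ
      have := tendsto_atBot_add_const_left atTop k tendsto_neg_atTop_atBot
      exact this.congr fun θ => by ring
    have hA : Tendsto (fun θ : ℝ => K * stdNormalCDF ((k - θ) / ψ)) atTop (𝓝 (K * 0)) :=
      (cdf_tendsto_atBot.comp hdBot).const_mul K
    set c₂ : ℝ := (Real.sqrt (2 * Real.pi))⁻¹ * Real.exp ((2 * ψ) ^ 2 / 2) / (2 * ψ) with hc2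
    have hub : ∀ θ : ℝ, Real.exp (θ + ψ ^ 2 / 2) * stdNormalCDF ((k - θ) / ψ - ψ)
        ≤ Real.exp (θ + ψ ^ 2 / 2) * (c₂ * Real.exp (2 * ψ * ((k - θ) / ψ - ψ))) := by
      intro θ
      exact mul_le_mul_of_nonneg_left (cdf_le_exp (by positivity) _) (Real.exp_pos _).le
    have hubeq : ∀ θ : ℝ, Real.exp (θ + ψ ^ 2 / 2) * (c₂ * Real.exp (2 * ψ * ((k - θ) / ψ - ψ)))
        = c₂ * Real.exp ((ψ ^ 2 / 2 + 2 * k - 2 * ψ ^ 2) - θ) := by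
      intro θ
      have h2 : 2 * ψ * ((k - θ) / ψ - ψ) = 2 * (k - θ) - 2 * ψ ^ 2 := by
        field_simp
      rw [h2]
      rw [show Real.exp (θ + ψ ^ 2 / 2) * (c₂ * Real.exp (2 * (k - θ) - 2 * ψ ^ 2))
        = c₂ * (Real.exp (θ + ψ ^ 2 / 2) * Real.exp (2 * (k - θ) - 2 * ψ ^ 2)) from by ring]
      rw [← Real.exp_add]
      congr 1
      ring
    have hubt : Tendsto (fun θ : ℝ => c₂ * Real.exp ((ψ ^ 2 / 2 + 2 * k - 2 * ψ ^ 2) - θ))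
        atTop (𝓝 0) := by
      have h : Tendsto (fun θ : ℝ => Real.exp ((ψ ^ 2 / 2 + 2 * k - 2 * ψ ^ 2) - θ)) atTop (𝓝 0) := by
        refine Real.tendsto_exp_atBot.comp ?_
        have := tendsto_atBot_add_const_left atTop (ψ ^ 2 / 2 + 2 * k - 2 * ψ ^ 2)
          tendsto_neg_atTop_atBot
        exact this.congr fun θ => by ring
      have := h.const_mul c₂
      rwa [mul_zero] at this
    have hB : Tendsto (fun θ : ℝ =>
        Real.exp (θ + ψ ^ 2 / 2) * stdNormalCDF ((k - θ) / ψ - ψ)) atTop (𝓝 0) := by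
      refine tendsto_of_tendsto_of_tendsto_of_le_of_le tendsto_const_nhds hubt
        (fun θ => mul_nonneg (Real.exp_pos _).le (cdf_nonneg _)) (fun θ => ?_)
      rw [← hubeq θ]
      exact hub θ
    have := hA.sub hB
    rw [mul_zero, sub_zero] at this
    exact this
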